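/- Let r ≥ 2 and a_1, …, a_r be integers ≥ 2, and let R := ℂ[x_1, …, x_r]/(x_i x_j for i ≠ j; a_i x_i^{a_i} − a_j x_j^{a_j} for i ≠ j). Define a symmetric bilinear form η on R by, on the basis {1, x_i^j (1 ≤ j ≤ a_i−1), w := a_1 x_1^{a_1}}: η(1, w) = 1, η(x_i^{j}, x_i^{a_i − j}) = 1/a_i, and all other pairings of basis elements zero. Then η is nondegenerate and satisfies the Frobenius property η(u·v, z) = η(u, v·z) for all u, v, z ∈ R. -/
import Mathlib


open MvPolynomial

/-- The defining ideal of the degenerate quantum cohomology ring of `ℙ¹_{A}`. -/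
noncomputable def relIdeal (r : ℕ) (a : Fin r → ℕ) : Ideal (MvPolynomial (Fin r) ℂ) :=
  Ideal.span ({p | ∃ i j : Fin r, i ≠ j ∧ p = X i * X j} ∪
    {p | ∃ i j : Fin r, i ≠ j ∧
      p = C (a i : ℂ) * X i ^ (a i) - C (a j : ℂ) * X j ^ (a j)})

set_option maxHeartbeats 1000000 in
/-- The orbifold Poincaré pairing is nondegenerate and Frobenius. Here `η` is the
symmetric bilinear form on `R = ℂ[x]/(...)` determined on the basis
`1, x_i^j (1 ≤ j ≤ a_i - 1), w = a_1 x_1^{a_1}` by `η(1,w) = 1`,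
`η(x_i^j, x_i^{a_i - j}) = 1/a_i`, all other pairings of basis elements zero. -/
theorem pairing_nondegenerate_frobenius (r : ℕ) (hr : 2 ≤ r) (a : Fin r → ℕ)
    (ha : ∀ k, 2 ≤ a k)
    (η : (MvPolynomial (Fin r) ℂ ⧸ relIdeal r a) →ₗ[ℂ]
      (MvPolynomial (Fin r) ℂ ⧸ relIdeal r a) →ₗ[ℂ] ℂ)
    (x : Fin r → MvPolynomial (Fin r) ℂ ⧸ relIdeal r a)
    (hx : ∀ i, x i = Ideal.Quotient.mk (relIdeal r a) (X i))
    (w : MvPolynomial (Fin r) ℂ ⧸ relIdeal r a)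
    (hw : w = Ideal.Quotient.mk (relIdeal r a)
      (C (a ⟨0, by omega⟩ : ℂ) * X (⟨0, by omega⟩ : Fin r) ^ (a ⟨0, by omega⟩)))
    (hsymm : ∀ u v, η u v = η v u)
    (h1w : η 1 w = 1) (hw1 : η w 1 = 1)
    (hxx : ∀ i₁ i₂ : Fin r, ∀ j₁ j₂ : ℕ, 1 ≤ j₁ → j₁ ≤ a i₁ - 1 →
      1 ≤ j₂ → j₂ ≤ a i₂ - 1 →
      η (x i₁ ^ j₁) (x i₂ ^ j₂) =
        if i₁ = i₂ ∧ j₂ = a i₁ - j₁ then 1 / (a i₁ : ℂ) else 0)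
    (h11 : η 1 1 = 0) (hww : η w w = 0)
    (h1x : ∀ i : Fin r, ∀ j : ℕ, 1 ≤ j → j ≤ a i - 1 → η 1 (x i ^ j) = 0)
    (hx1 : ∀ i : Fin r, ∀ j : ℕ, 1 ≤ j → j ≤ a i - 1 → η (x i ^ j) 1 = 0)
    (hxw : ∀ i : Fin r, ∀ j : ℕ, 1 ≤ j → j ≤ a i - 1 → η (x i ^ j) w = 0)
    (hwx : ∀ i : Fin r, ∀ j : ℕ, 1 ≤ j → j ≤ a i - 1 → η w (x i ^ j) = 0) :
    (∀ u, (∀ v, η u v = 0) → u = 0) ∧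
    (∀ u v z, η (u * v) z = η u (v * z)) := by
  classical
  set i0 : Fin r := ⟨0, by omega⟩ with hi0
  have haC : ∀ k, (a k : ℂ) ≠ 0 := fun k =>
    Nat.cast_ne_zero.mpr (by have := ha k; omega)
  have hmkC : ∀ (c : ℂ) (p : MvPolynomial (Fin r) ℂ),
      Ideal.Quotient.mk (relIdeal r a) (C c * p)
        = c • Ideal.Quotient.mk (relIdeal r a) p := by
    intro c p
    rw [← smul_eq_C_mul, ← Ideal.Quotient.mkₐ_eq_mk ℂ, map_smul]
  -- basic relations in the quotient ring
  have hx2 : ∀ i j : Fin r, i ≠ j → x i * x j = 0 := by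
    intro i j hij
    rw [hx, hx, ← map_mul]
    exact Ideal.Quotient.eq_zero_iff_mem.mpr
      (Ideal.subset_span (Or.inl ⟨i, j, hij, rfl⟩))
  have hrel : ∀ i, (a i : ℂ) • x i ^ (a i) = w := by
    intro i
    rw [hx, ← map_pow, ← hmkC, hw]
    rcases eq_or_ne i i0 with rfl | h
    · rfl
    · exact (Ideal.Quotient.mk_eq_mk_iff_sub_mem _ _).mpr
        (Ideal.subset_span (Or.inr ⟨i, ⟨0, by omega⟩, h, rfl⟩))
  have hw_eq : ∀ i, x i ^ (a i) = (a i : ℂ)⁻¹ • w := by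
    intro i
    rw [← hrel i, smul_smul, inv_mul_cancel₀ (haC i), one_smul]
  have hwx0 : ∀ i, w * x i = 0 := by
    intro i
    obtain ⟨j, hj⟩ : ∃ j : Fin r, j ≠ i := by
      rcases eq_or_ne i i0 with rfl | h
      · exact ⟨⟨1, by omega⟩, by simp [hi0, Fin.ext_iff]⟩
      · exact ⟨i0, h.symm⟩
    obtain ⟨m, hm⟩ : ∃ m, a j = m + 1 := ⟨a j - 1, by have := ha j; omega⟩
    rw [← hrel j, smul_mul_assoc, hm, pow_succ, mul_assoc, hx2 j i hj,
      mul_zero, smul_zero]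
  have hxp0 : ∀ (i : Fin r) (m : ℕ), a i + 1 ≤ m → x i ^ m = 0 := by
    intro i m hm
    have h1 : x i ^ (a i + 1) = 0 := by
      have h2 : (a i : ℂ) • x i ^ (a i + 1) = 0 := by
        rw [pow_succ, ← smul_mul_assoc, hrel i, hwx0 i]
      have h3 : ((a i : ℂ)⁻¹ * (a i : ℂ)) • x i ^ (a i + 1) = 0 := by
        rw [mul_smul, h2, smul_zero]
      rwa [inv_mul_cancel₀ (haC i), one_smul] at h3
    calc x i ^ m = x i ^ (a i + 1) * x i ^ (m - (a i + 1)) := by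
          rw [← pow_add]; congr 1; omega
      _ = 0 := by rw [h1, zero_mul]
  have hwp0 : ∀ (i : Fin r) (j : ℕ), 1 ≤ j → w * x i ^ j = 0 := by
    intro i j hj
    obtain ⟨m, rfl⟩ : ∃ m, j = m + 1 := ⟨j - 1, by omega⟩
    rw [pow_succ', ← mul_assoc, hwx0, zero_mul]
  have hww0 : w * w = 0 := by
    nth_rewrite 2 [← hrel i0]
    rw [mul_smul_comm]
    obtain ⟨m, hm⟩ : ∃ m, a i0 = m + 1 := ⟨a i0 - 1, by have := ha i0; omega⟩
    rw [hm, pow_succ', ← mul_assoc, hwx0, zero_mul, smul_zero]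
  have hmix : ∀ (i k : Fin r) (j l : ℕ), i ≠ k → 1 ≤ j → 1 ≤ l →
      x i ^ j * x k ^ l = 0 := by
    intro i k j l hik hj hl
    obtain ⟨m, rfl⟩ : ∃ m, j = m + 1 := ⟨j - 1, by omega⟩
    obtain ⟨n, rfl⟩ : ∃ n, l = n + 1 := ⟨l - 1, by omega⟩
    calc x i ^ (m + 1) * x k ^ (n + 1)
        = (x i ^ m * x k ^ n) * (x i * x k) := by ring
      _ = 0 := by rw [hx2 i k hik, mul_zero]
  -- the spanning set
  obtain ⟨S, hSdef⟩ : ∃ S : Set (MvPolynomial (Fin r) ℂ ⧸ relIdeal r a),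
      S = {u | u = 1 ∨ (∃ i : Fin r, ∃ j : ℕ, 1 ≤ j ∧ j ≤ a i - 1 ∧ u = x i ^ j)
        ∨ u = w} := ⟨_, rfl⟩
  have hS1 : (1 : MvPolynomial (Fin r) ℂ ⧸ relIdeal r a) ∈ S := by
    rw [hSdef]; exact Or.inl rfl
  have hSw : w ∈ S := by rw [hSdef]; exact Or.inr (Or.inr rfl)
  have hSx : ∀ (i : Fin r) (j : ℕ), 1 ≤ j → j ≤ a i - 1 → x i ^ j ∈ S := by
    intro i j h1 h2; rw [hSdef]; exact Or.inr (Or.inl ⟨i, j, h1, h2, rfl⟩)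
  have hmulS : ∀ (i : Fin r) u, u ∈ Submodule.span ℂ S →
      u * x i ∈ Submodule.span ℂ S := by
    intro i u hu
    induction hu using Submodule.span_induction with
    | mem s hs =>
      rw [hSdef] at hs
      rcases hs with rfl | ⟨k, j, hj1, hj2, rfl⟩ | rfl
      · rw [one_mul, ← pow_one (x i)]
        exact Submodule.subset_span (hSx i 1 le_rfl (by have := ha i; omega))
      · rcases eq_or_ne k i with rfl | hki
        · rw [← pow_succ]
          rcases Nat.lt_or_ge (j + 1) (a k) with h | h
          · exact Submodule.subset_span (hSx k (j + 1) (by omega) (by omega))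
          · have hja : j + 1 = a k := by have := ha k; omega
            rw [hja, hw_eq]
            exact Submodule.smul_mem _ _ (Submodule.subset_span hSw)
        · rw [← pow_one (x i), hmix k i j 1 hki hj1 le_rfl]
          exact Submodule.zero_mem _
      · rw [hwx0 i]
        exact Submodule.zero_mem _
    | zero => rw [zero_mul]; exact Submodule.zero_mem _
    | add y z hy hz ihy ihz => rw [add_mul]; exact Submodule.add_mem _ ihy ihz
    | smul c y hy ihy => rw [smul_mul_assoc]; exact Submodule.smul_mem _ _ ihy
  have hspan : ∀ u : MvPolynomial (Fin r) ℂ ⧸ relIdeal r a,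
      u ∈ Submodule.span ℂ S := by
    intro u
    obtain ⟨p, rfl⟩ := Ideal.Quotient.mk_surjective u
    induction p using MvPolynomial.induction_on with
    | C c =>
      rw [show (C c : MvPolynomial (Fin r) ℂ) = C c * 1 from (mul_one _).symm,
        hmkC, map_one]
      exact Submodule.smul_mem _ _ (Submodule.subset_span hS1)
    | add p q hp hq => rw [map_add]; exact Submodule.add_mem _ hp hq
    | mul_X p i hp => rw [map_mul, ← hx]; exact hmulS i _ hp
  -- the key identity
  have key : ∀ u v, η (u * v) 1 = η u v := by
    have main : ∀ u ∈ Submodule.span ℂ S, ∀ v ∈ Submodule.span ℂ S,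
        η (u * v) 1 = η u v := by
      intro u hu
      induction hu using Submodule.span_induction with
      | mem s hs =>
        intro v hv
        induction hv using Submodule.span_induction with
        | mem t ht =>
          rw [hSdef] at hs ht
          rcases ht with rfl | ⟨k, l, hl1, hl2, rfl⟩ | rfl
          · rw [mul_one]
          · rcases hs with rfl | ⟨i, j, hj1, hj2, rfl⟩ | rfl
            · rw [one_mul, hsymm]
            · rcases eq_or_ne i k with rfl | hik
              · rw [← pow_add]
                rcases Nat.lt_or_ge (j + l) (a i) with h | h
                · rw [hx1 i (j + l) (by omega) (by omega),
                    hxx i i j l hj1 hj2 hl1 hl2, if_neg]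
                  rintro ⟨-, h2⟩
                  have := ha i; omega
                · rcases Nat.eq_or_lt_of_le h with h' | h'
                  · rw [← h', hw_eq i, map_smul, LinearMap.smul_apply, hw1,
                      smul_eq_mul, mul_one, hxx i i j l hj1 hj2 hl1 hl2,
                      if_pos ⟨rfl, by omega⟩, one_div]
                  · rw [hxp0 i (j + l) (by omega), map_zero,
                      LinearMap.zero_apply, hxx i i j l hj1 hj2 hl1 hl2, if_neg]
                    rintro ⟨-, h2⟩
                    have := ha i; omega
              · rw [hmix i k j l hik hj1 hl1, map_zero, LinearMap.zero_apply,
                  hxx i k j l hj1 hj2 hl1 hl2, if_neg]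
                rintro ⟨h', -⟩; exact hik h'
            · rw [hwp0 k l hl1, map_zero, LinearMap.zero_apply, hwx k l hl1 hl2]
          · rcases hs with rfl | ⟨i, j, hj1, hj2, rfl⟩ | rfl
            · rw [one_mul, hsymm]
            · rw [mul_comm, hwp0 i j hj1, map_zero, LinearMap.zero_apply,
                hxw i j hj1 hj2]
            · rw [hww0, map_zero, LinearMap.zero_apply, hww]
        | zero => simp
        | add y z hy hz ihy ihz =>
          simp only [mul_add, map_add, LinearMap.add_apply, ihy, ihz]
        | smul c y hy ihy =>
          simp only [mul_smul_comm, map_smul, LinearMap.smul_apply,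
            smul_eq_mul, ihy]
      | zero => intro v hv; simp
      | add y z hy hz ihy ihz =>
        intro v hv
        simp only [add_mul, map_add, LinearMap.add_apply, ihy v hv, ihz v hv]
      | smul c y hy ihy =>
        intro v hv
        simp only [smul_mul_assoc, map_smul, LinearMap.smul_apply, ihy v hv]
    intro u v
    exact main u (hspan u) v (hspan v)
  have frob : ∀ u v z, η (u * v) z = η u (v * z) := by
    intro u v z
    rw [← key (u * v) z, ← key u (v * z), mul_assoc]
  -- the reproducing formula, giving nondegeneracy
  have hrep : ∀ u : MvPolynomial (Fin r) ℂ ⧸ relIdeal r a,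
      u = (η u w) • 1 + (η u 1) • w +
        ∑ i : Fin r, ∑ j ∈ Finset.Icc 1 (a i - 1),
          ((a i : ℂ) * η u (x i ^ (a i - j))) • x i ^ j := by
    intro u
    have hu := hspan u
    induction hu using Submodule.span_induction with
    | mem s hs =>
      rw [hSdef] at hs
      rcases hs with rfl | ⟨k, l, hl1, hl2, rfl⟩ | rfl
      · rw [h1w, h11, one_smul, zero_smul, add_zero,
          Finset.sum_eq_zero, add_zero]
        intro i _
        refine Finset.sum_eq_zero fun j hj => ?_
        rw [Finset.mem_Icc] at hj
        have := ha i
        rw [h1x i (a i - j) (by omega) (by omega), mul_zero, zero_smul]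
      · rw [hxw k l hl1 hl2, hx1 k l hl1 hl2, zero_smul, zero_smul, zero_add,
          zero_add, Finset.sum_eq_single k]
        · rw [Finset.sum_eq_single l]
          · have := ha k
            rw [hxx k k l (a k - l) hl1 hl2 (by omega) (by omega),
              if_pos ⟨rfl, rfl⟩, mul_one_div, div_self (haC k), one_smul]
          · intro j hj hjl
            rw [Finset.mem_Icc] at hj
            have := ha k
            rw [hxx k k l (a k - j) hl1 hl2 (by omega) (by omega), if_neg,
              mul_zero, zero_smul]
            rintro ⟨-, h2⟩
            exact hjl (by omega)
          · intro hl
            exact absurd (Finset.mem_Icc.mpr ⟨hl1, hl2⟩) hl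
        · intro i _ hik
          refine Finset.sum_eq_zero fun j hj => ?_
          rw [Finset.mem_Icc] at hj
          have := ha i
          rw [hxx k i l (a i - j) hl1 hl2 (by omega) (by omega), if_neg,
            mul_zero, zero_smul]
          rintro ⟨h', -⟩; exact hik h'.symm
        · intro h; exact absurd (Finset.mem_univ k) h
      · rw [hww, hw1, zero_smul, zero_add, one_smul, Finset.sum_eq_zero,
          add_zero]
        intro i _
        refine Finset.sum_eq_zero fun j hj => ?_
        rw [Finset.mem_Icc] at hj
        have := ha i
        rw [hwx i (a i - j) (by omega) (by omega), mul_zero, zero_smul]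
    | zero => simp
    | add y z hy hz ihy ihz =>
      conv_lhs => rw [ihy, ihz]
      simp only [map_add, LinearMap.add_apply, add_smul, mul_add,
        Finset.sum_add_distrib]
      abel
    | smul c y hy ihy =>
      conv_lhs => rw [ihy]
      simp only [map_smul, LinearMap.smul_apply, smul_eq_mul, smul_add,
        smul_smul, Finset.smul_sum, mul_left_comm]
  refine ⟨fun u hu => ?_, frob⟩
  simpa [hu] using hrep u
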